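/- Let w = (w_1,…,w_n) ∈ {0,1}^n be a binary word of length n ≥ 1 (ordered 0 < 1) whose C-orbit is free, i.e., the n cyclic shifts w, c(w), c^2(w), …, c^{n−1}(w) are pairwise distinct. Then in ℤ[t] one has the congruence Σ_{j=0}^{n−1} t^{inv(c^j(w))} ≡ t^{inv(w)} · Σ_{j=0}^{n−1} t^{j·wt(w)} (mod t^n − 1). -/

import Mathlib

/-- The (leftward) cyclic shift on words of length `n`:
`c(w₁,…,wₙ) = (w₂,…,wₙ,w₁)`. -/
def cshift {A : Type*} {n : ℕ} (w : Fin n → A) : Fin n → A :=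
  fun i => w ⟨((i : ℕ) + 1) % n, Nat.mod_lt _ i.pos⟩

/-- The major index of a word: `maj w = Σ_{1 ≤ i ≤ n-1, w_i > w_{i+1}} i`
(here positions are 0-indexed, so position `i : Fin n` is the `(i+1)`-st letter). -/
def majIdx {A : Type*} [LinearOrder A] {n : ℕ} (w : Fin n → A) : ℕ :=
  ∑ i : Fin n,
    if h : (i : ℕ) + 1 < n then (if w ⟨(i : ℕ) + 1, h⟩ < w i then (i : ℕ) + 1 else 0) else 0

/-- The number of cyclic descents of a word, `cdes w = #{i : w_i > w_{i+1}}`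
with indices read cyclically (`w_{n+1} := w_1`). -/
def cdes {A : Type*} [LinearOrder A] {n : ℕ} (w : Fin n → A) : ℕ :=
  (Finset.univ.filter fun i : Fin n =>
    w ⟨((i : ℕ) + 1) % n, Nat.mod_lt _ i.pos⟩ < w i).card

/-- The inversion number of a word: `inv w = #{(i,j) : i < j, w_i > w_j}`. -/
def invNum {A : Type*} [LinearOrder A] {n : ℕ} (w : Fin n → A) : ℕ :=
  (Finset.univ.filter fun p : Fin n × Fin n => p.1 < p.2 ∧ w p.2 < w p.1).card

/-- The Hamming weight of a binary word: the number of ones. -/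
def wt {n : ℕ} (w : Fin n → Bool) : ℕ :=
  (Finset.univ.filter fun i => w i = true).card

/-- The triple `(X, Σ_{x ∈ X} t^{stat x}, C)` exhibits the cyclic sieving phenomenon,
where `C` is the cyclic group of order `n` generated by the cyclic shift `c` acting on `X`:
for every `d`, the number of fixed points of `c^d` on `X` equals the evaluation of
`Σ_{x ∈ X} t^{stat x}` at `t = ζ^d`, with `ζ = exp(2πi/n)`. -/
def exhibitsCSP {A : Type*} [DecidableEq A] {n : ℕ} (X : Finset (Fin n → A))
    (stat : (Fin n → A) → ℕ) : Prop :=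
  ∀ d : ℕ,
    ((X.filter fun v => cshift^[d] v = v).card : ℂ) =
      ∑ v ∈ X, Complex.exp (2 * (Real.pi : ℂ) * Complex.I / n) ^ (d * stat v)

open Polynomial Finset in
lemma dvd_X_pow_sub_X_pow {n a b : ℕ} (h : a % n = b % n) :
    ((X : ℤ[X]) ^ n - 1) ∣ (X ^ a - X ^ b) := by
  have key : ∀ c : ℕ, ((X : ℤ[X]) ^ n - 1) ∣ X ^ c - X ^ (c % n) := by
    intro c
    have h1 : (X : ℤ[X]) ^ c = ((X : ℤ[X]) ^ n) ^ (c / n) * X ^ (c % n) := by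
      rw [← pow_mul, ← pow_add, Nat.div_add_mod]
    have h3 := sub_dvd_pow_sub_pow ((X : ℤ[X]) ^ n) 1 (c / n)
    simp only [one_pow] at h3
    rw [h1, show ((X:ℤ[X])^n)^(c/n) * X^(c%n) - X^(c%n)
        = (((X:ℤ[X])^n)^(c/n) - 1) * X^(c%n) by ring]
    exact h3.mul_right _
  have := (key a).sub (key b)
  rw [h] at this
  simpa using this

lemma cshift_eq {A : Type*} {m : ℕ} (w : Fin (m+1) → A) (i : Fin (m+1)) :
    cshift w i = w (finRotate (m+1) i) := by
  have h : finRotate (m+1) i = ⟨((i : ℕ) + 1) % (m+1), Nat.mod_lt _ i.pos⟩ := by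
    rw [finRotate_succ_apply, Fin.ext_iff, Fin.add_def]
    simp [Nat.add_mod]
  rw [cshift, h]

lemma invNum_eq_sum {A : Type*} [LinearOrder A] {n : ℕ} (w : Fin n → A) :
    invNum w = ∑ i : Fin n, ∑ j : Fin n, if i < j ∧ w j < w i then 1 else 0 := by
  rw [invNum, Finset.card_filter]
  exact Fintype.sum_prod_type (f := fun p : Fin n × Fin n => if p.1 < p.2 ∧ w p.2 < w p.1 then (1:ℕ) else 0)

lemma wt_eq_sum {n : ℕ} (w : Fin n → Bool) :
    wt w = ∑ i : Fin n, if w i = true then 1 else 0 := Finset.card_filter _ _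

lemma finRotate_symm_zero (m : ℕ) : (finRotate (m+1)).symm 0 = Fin.last m := by
  rw [Equiv.symm_apply_eq, finRotate_succ_apply, Fin.last_add_one]

lemma finRotate_symm_succ {m : ℕ} (a : Fin m) :
    (finRotate (m+1)).symm a.succ = a.castSucc := by
  rw [Equiv.symm_apply_eq, finRotate_succ_apply, Fin.coeSucc_eq_succ]

lemma inv_cshift_key {m : ℕ} (w : Fin (m+1) → Bool) :
    invNum (cshift w) + ∑ b : Fin m, (if w b.succ < w 0 then 1 else 0)
      = invNum w + ∑ a : Fin m, (if w 0 < w a.succ then 1 else 0) := by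
  have h2 : invNum (cshift w) = ∑ a : Fin (m+1), ∑ b : Fin (m+1),
      if (finRotate (m+1)).symm a < (finRotate (m+1)).symm b ∧ w b < w a then 1 else 0 := by
    rw [invNum_eq_sum]
    simp only [cshift_eq]
    apply Fintype.sum_equiv (finRotate (m+1))
    intro i
    apply Fintype.sum_equiv (finRotate (m+1))
    intro j
    simp only [Equiv.symm_apply_apply]
  rw [h2, invNum_eq_sum]
  rw [Fin.sum_univ_succ]
  conv_lhs => rw [Fin.sum_univ_succ (f := fun b => if (finRotate (m+1)).symm 0 < (finRotate (m+1)).symm b ∧ w b < w 0 then 1 else 0)]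
  conv_lhs =>
    enter [1, 2, 2, a]
    rw [Fin.sum_univ_succ]
  conv_rhs => rw [Fin.sum_univ_succ]
  conv_rhs => rw [Fin.sum_univ_succ (f := fun b => if (0 : Fin (m+1)) < b ∧ w b < w 0 then 1 else 0)]
  conv_rhs =>
    enter [1, 2, 2, a]
    rw [Fin.sum_univ_succ]
  simp only [finRotate_symm_zero, finRotate_symm_succ, lt_irrefl, false_and, if_false,
    Fin.castSucc_lt_last, Fin.castSucc_lt_castSucc_iff, Fin.succ_pos, Fin.succ_lt_succ_iff,
    true_and, (Fin.castSucc_lt_last _).not_gt, Fin.not_lt_zero]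
  simp only [Finset.sum_add_distrib, Finset.sum_const_zero, zero_add]
  omega

lemma inv_cshift_modEq {m : ℕ} (w : Fin (m+1) → Bool) :
    invNum (cshift w) ≡ invNum w + wt w [MOD (m+1)] := by
  have hkey := inv_cshift_key w
  have hwt : wt w = (if w 0 = true then 1 else 0)
      + ∑ a : Fin m, (if w a.succ = true then 1 else 0) := by
    rw [wt_eq_sum, Fin.sum_univ_succ]
  cases hw : w 0 with
  | true =>
      have hB : ∑ a : Fin m, (if w 0 < w a.succ then 1 else 0) = 0 := by
        apply Finset.sum_eq_zero
        intro a _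
        simp [hw, Bool.lt_iff]
      have hA : (∑ b : Fin m, (if w b.succ < w 0 then 1 else 0))
          + ∑ a : Fin m, (if w a.succ = true then 1 else 0) = m := by
        rw [← Finset.sum_add_distrib]
        rw [Finset.sum_congr rfl (fun b _ => ?_), Finset.sum_const, Finset.card_univ,
          Fintype.card_fin, smul_eq_mul, mul_one]
        cases hwb : w b.succ <;> simp [hw, hwb, Bool.lt_iff]
      rw [hB, add_zero] at hkey
      have hwt' : wt w = 1 + ∑ a : Fin m, (if w a.succ = true then 1 else 0) := by
        rw [hwt, hw]; simp
      have h5 : invNum w + wt w = invNum (cshift w) + (m + 1) := by omega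
      unfold Nat.ModEq
      rw [h5, Nat.add_mod_right]
  | false =>
      have hA : ∑ b : Fin m, (if w b.succ < w 0 then 1 else 0) = 0 := by
        apply Finset.sum_eq_zero
        intro b _
        simp [hw, Bool.lt_iff]
      have hB : ∑ a : Fin m, (if w 0 < w a.succ then 1 else 0)
          = ∑ a : Fin m, (if w a.succ = true then 1 else 0) := by
        apply Finset.sum_congr rfl
        intro a _
        cases hwa : w a.succ <;> simp [hw, hwa, Bool.lt_iff]
      have hwt' : wt w = ∑ a : Fin m, (if w a.succ = true then 1 else 0) := by
        rw [hwt, hw]; simp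
      have h5 : invNum (cshift w) = invNum w + wt w := by omega
      rw [h5]

lemma wt_cshift {m : ℕ} (w : Fin (m+1) → Bool) : wt (cshift w) = wt w := by
  rw [wt_eq_sum, wt_eq_sum]
  simp only [cshift_eq]
  exact Equiv.sum_comp (finRotate (m+1)) (fun i => if w i = true then (1:ℕ) else 0)

lemma wt_iter {m : ℕ} (w : Fin (m+1) → Bool) (k : ℕ) : wt (cshift^[k] w) = wt w := by
  induction k with
  | zero => rfl
  | succ j ih => rw [Function.iterate_succ_apply', wt_cshift, ih]

lemma inv_iter_modEq {m : ℕ} (w : Fin (m+1) → Bool) (j : ℕ) :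
    invNum (cshift^[j] w) ≡ invNum w + j * wt w [MOD (m+1)] := by
  induction j with
  | zero => simp [Nat.ModEq]
  | succ k ih =>
      rw [Function.iterate_succ_apply']
      have h1 := inv_cshift_modEq (cshift^[k] w)
      rw [wt_iter] at h1
      calc invNum (cshift (cshift^[k] w))
          ≡ invNum (cshift^[k] w) + wt w [MOD (m+1)] := h1
        _ ≡ (invNum w + k * wt w) + wt w [MOD (m+1)] := ih.add_right _
        _ = invNum w + (k + 1) * wt w := by ring

/-- if the C-orbit of a binary word w is free, then in ℤ[t] one has
Σ_{j=0}^{n-1} t^{inv(c^j(w))} ≡ t^{inv w} · Σ_{j=0}^{n-1} t^{j·wt w}  (mod t^n - 1). -/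
theorem stmt6 {n : ℕ} (hn : 1 ≤ n) (w : Fin n → Bool)
    (hfree : ∀ i j : Fin n, cshift^[(i : ℕ)] w = cshift^[(j : ℕ)] w → i = j) :
    ((Polynomial.X : Polynomial ℤ) ^ n - 1) ∣
      ((∑ j ∈ Finset.range n, (Polynomial.X : Polynomial ℤ) ^ invNum (cshift^[j] w)) -
        Polynomial.X ^ invNum w *
          ∑ j ∈ Finset.range n, (Polynomial.X : Polynomial ℤ) ^ (j * wt w)) := by
  obtain ⟨m, rfl⟩ : ∃ m, n = m + 1 := ⟨n - 1, by omega⟩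
  have hrw : Polynomial.X ^ invNum w *
        ∑ j ∈ Finset.range (m+1), (Polynomial.X : Polynomial ℤ) ^ (j * wt w)
      = ∑ j ∈ Finset.range (m+1), (Polynomial.X : Polynomial ℤ) ^ (invNum w + j * wt w) := by
    rw [Finset.mul_sum]
    exact Finset.sum_congr rfl fun j _ => (pow_add _ _ _).symm
  rw [hrw, ← Finset.sum_sub_distrib]
  apply Finset.dvd_sum
  intro j hj
  exact dvd_X_pow_sub_X_pow (inv_iter_modEq w j)
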